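/- arXiv:2004.05914 — 5 statements merged into one kernel-verified Lean document; each statement's English description precedes it below -/
import Mathlib

section
/- Let σ(t) = 1/(1 + exp(−t)) and F(w, b) = σ(b − w)² + (σ(w + b) − 1)². Then for every (w, b) ∈ ℝ², the sum of the two partial derivatives satisfies ∂F/∂b(w, b) + ∂F/∂w(w, b) = 4(σ(w + b) − 1)σ′(w + b) < 0. In particular, F has no critical points: its gradient is nonzero at every point of ℝ². -/
lemma sig_hasDeriv (t : ℝ) :
    HasDerivAt (fun t : ℝ => 1 / (1 + Real.exp (-t)))
      (Real.exp (-t) / (1 + Real.exp (-t)) ^ 2) t := by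
  have hpos : (0:ℝ) < 1 + Real.exp (-t) := by positivity
  have h1 : HasDerivAt (fun t : ℝ => 1 + Real.exp (-t)) (-Real.exp (-t)) t := by
    simpa using (HasDerivAt.exp ((hasDerivAt_id t).neg)).const_add 1
  have h2 : HasDerivAt (fun t : ℝ => (1 + Real.exp (-t))⁻¹)
      (-(-Real.exp (-t)) / (1 + Real.exp (-t)) ^ 2) t := h1.inv hpos.ne'
  simpa [one_div, neg_neg] using h2

/-- The normal-training loss `F(w, b) = σ(b − w)² + (σ(w + b) − 1)²` satisfies
`∂F/∂b + ∂F/∂w = 4(σ(w + b) − 1)σ′(w + b) < 0` everywhere; in particular `F` has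
no critical points. -/
theorem stmt_6 :
    let σ : ℝ → ℝ := fun t => 1 / (1 + Real.exp (-t))
    let F : ℝ → ℝ → ℝ := fun w b => σ (b - w) ^ 2 + (σ (w + b) - 1) ^ 2
    ∀ w b : ℝ,
      deriv (fun b' => F w b') b + deriv (fun w' => F w' b) w
          = 4 * (σ (w + b) - 1) * deriv σ (w + b) ∧
      4 * (σ (w + b) - 1) * deriv σ (w + b) < 0 ∧
      ¬(deriv (fun b' => F w b') b = 0 ∧ deriv (fun w' => F w' b) w = 0) := by
  intro σ F w b
  set s : ℝ → ℝ := fun t => Real.exp (-t) / (1 + Real.exp (-t)) ^ 2 with hs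
  have hσd : deriv σ (w + b) = s (w + b) := (sig_hasDeriv (w + b)).deriv
  have hb : HasDerivAt (fun b' => F w b')
      (2 * σ (b - w) * s (b - w) + 2 * (σ (w + b) - 1) * s (w + b)) b := by
    have h1 : HasDerivAt (fun b' : ℝ => σ (b' - w)) (s (b - w)) b := by
      simpa only [Function.comp_def, mul_one, id_eq] using (sig_hasDeriv (b - w)).comp b ((hasDerivAt_id b).sub_const w)
    have h2 : HasDerivAt (fun b' : ℝ => σ (w + b')) (s (w + b)) b := by
      simpa only [Function.comp_def, mul_one] using (sig_hasDeriv (w + b)).comp b ((hasDerivAt_id b).const_add w)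
    have h := (h1.fun_pow 2).add ((h2.sub_const 1).fun_pow 2)
    refine h.congr_deriv ?_
    ring
  have hw : HasDerivAt (fun w' => F w' b)
      (-(2 * σ (b - w) * s (b - w)) + 2 * (σ (w + b) - 1) * s (w + b)) w := by
    have h1 : HasDerivAt (fun w' : ℝ => σ (b - w')) (-(s (b - w))) w := by
      simpa only [Function.comp_def, mul_neg, mul_one] using (sig_hasDeriv (b - w)).comp w ((hasDerivAt_id w).const_sub b)
    have h2 : HasDerivAt (fun w' : ℝ => σ (w' + b)) (s (w + b)) w := by
      simpa only [Function.comp_def, mul_one, id_eq] using (sig_hasDeriv (w + b)).comp w ((hasDerivAt_id w).add_const b)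
    have h := (h1.fun_pow 2).add ((h2.sub_const 1).fun_pow 2)
    refine h.congr_deriv ?_
    ring
  have hsum : deriv (fun b' => F w b') b + deriv (fun w' => F w' b) w
      = 4 * (σ (w + b) - 1) * deriv σ (w + b) := by
    rw [hb.deriv, hw.deriv, hσd]; ring
  have hneg : 4 * (σ (w + b) - 1) * deriv σ (w + b) < 0 := by
    rw [hσd]
    have hpos : (0:ℝ) < 1 + Real.exp (-(w + b)) := by positivity
    have hσlt : σ (w + b) < 1 := by
      rw [show σ (w + b) = 1 / (1 + Real.exp (-(w + b))) from rfl,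
        div_lt_one hpos]
      have := Real.exp_pos (-(w + b))
      linarith
    have hspos : (0:ℝ) < s (w + b) := by
      simp only [hs]
      positivity
    nlinarith
  refine ⟨hsum, hneg, fun ⟨h1, h2⟩ => ?_⟩
  rw [h1, h2, add_zero] at hsum
  linarith [hneg, hsum.symm ▸ hneg]
end

section
/- Let σ(t) = 1/(1 + exp(−t)) and F(w, b) = σ(b − w)² + (σ(w + b) − 1)². Then for every w ∈ ℝ, ∂F/∂w(w, 0) = −4 σ(w) σ(−w)² = −4 / ((1 + e^{−w})(1 + e^{w})²). Consequently, for a regularization constant λ > 0 and w > 0, the function w ↦ F(w, 0) + λ w has derivative zero at w if and only if λ (1 + e^{w})² (1 + e^{−w}) = 4. -/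
open Real

lemma aux_pos (w : ℝ) : (0:ℝ) < 1 + Real.exp w := by positivity

lemma aux_deriv (w : ℝ) :
    HasDerivAt (fun w' => 2 / (1 + Real.exp w') ^ 2)
      (-4 * Real.exp w / (1 + Real.exp w) ^ 3) w := by
  have h1 : HasDerivAt (fun w' => (1 + Real.exp w') ^ 2)
      (2 * (1 + Real.exp w) * Real.exp w) w := by
    have := ((Real.hasDerivAt_exp w).const_add 1).pow 2
    simpa [mul_comm, mul_assoc, mul_left_comm] using
      (show HasDerivAt (fun w' => (1 + Real.exp w') ^ 2) _ w from this)
  have hne : (1 + Real.exp w) ^ 2 ≠ 0 := by positivity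
  have := (show HasDerivAt (fun w' => 2 / (1 + Real.exp w') ^ 2) _ w from
    (hasDerivAt_const w (2:ℝ)).div h1 hne)
  convert this using 1
  have h0 : (1 + Real.exp w) ≠ 0 := (aux_pos w).ne'
  field_simp
  ring

lemma aux_fun_eq :
    (fun w' : ℝ => (1 / (1 + Real.exp (-(0 - w')))) ^ 2
      + (1 / (1 + Real.exp (-(w' + 0))) - 1) ^ 2)
    = fun w' : ℝ => 2 / (1 + Real.exp w') ^ 2 := by
  funext w
  have h0 : (1 + Real.exp w) ≠ 0 := (aux_pos w).ne'
  have h1 : (1 + Real.exp (-w)) ≠ 0 := (aux_pos (-w)).ne'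
  have he : Real.exp (-w) = 1 / Real.exp w := by
    rw [Real.exp_neg]; exact inv_eq_one_div _
  simp only [neg_sub, zero_sub, add_zero, neg_neg]
  rw [he] at h1 ⊢
  have hew : Real.exp w ≠ 0 := (Real.exp_pos w).ne'
  field_simp
  ring

/-- For the normal-training loss `F(w, b) = σ(b − w)² + (σ(w + b) − 1)²` one has
`∂F/∂w(w, 0) = −4σ(w)σ(−w)² = −4/((1 + e^{−w})(1 + e^{w})²)`; consequently, for a
regularization constant `λ > 0` and `w > 0`, the regularized loss `w ↦ F(w, 0) + λw`
is stationary at `w` iff `λ(1 + e^{w})²(1 + e^{−w}) = 4`. -/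
theorem stmt_9 :
    let σ : ℝ → ℝ := fun t => 1 / (1 + Real.exp (-t))
    let F : ℝ → ℝ → ℝ := fun w b => σ (b - w) ^ 2 + (σ (w + b) - 1) ^ 2
    ∀ w : ℝ,
      deriv (fun w' => F w' 0) w = -4 * σ w * σ (-w) ^ 2 ∧
      deriv (fun w' => F w' 0) w
        = -4 / ((1 + Real.exp (-w)) * (1 + Real.exp w) ^ 2) ∧
      (∀ lam : ℝ, 0 < lam → 0 < w →
        (deriv (fun w' => F w' 0 + lam * w') w = 0 ↔
          lam * (1 + Real.exp w) ^ 2 * (1 + Real.exp (-w)) = 4)) := by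
  intro σ F w
  have h0 : (1 + Real.exp w) ≠ 0 := (aux_pos w).ne'
  have h1 : (1 + Real.exp (-w)) ≠ 0 := (aux_pos (-w)).ne'
  have hew : Real.exp w ≠ 0 := (Real.exp_pos w).ne'
  have he : Real.exp (-w) = 1 / Real.exp w := by
    rw [Real.exp_neg]; exact inv_eq_one_div _
  have hFfun : (fun w' => F w' 0) = fun w' : ℝ => 2 / (1 + Real.exp w') ^ 2 := by
    simpa [F, σ] using aux_fun_eq
  have hd : deriv (fun w' => F w' 0) w
      = -4 * Real.exp w / (1 + Real.exp w) ^ 3 := by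
    rw [hFfun]; exact (aux_deriv w).deriv
  have e1 : deriv (fun w' => F w' 0) w = -4 * σ w * σ (-w) ^ 2 := by
    rw [hd]; simp only [σ, neg_neg]
    rw [he] at h1 ⊢
    field_simp
    ring
  refine ⟨e1, ?_, ?_⟩
  · rw [hd, he] at *
    rw [he]
    field_simp
    ring
  · intro lam hlam hw
    have hfun2 : (fun w' => F w' 0 + lam * w')
        = fun w' : ℝ => 2 / (1 + Real.exp w') ^ 2 + lam * w' := by
      funext x
      rw [congrFun hFfun x]
    have hder : deriv (fun w' => F w' 0 + lam * w') w
        = -4 * Real.exp w / (1 + Real.exp w) ^ 3 + lam := by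
      rw [hfun2]
      have := (aux_deriv w).add ((hasDerivAt_id w).const_mul lam)
      simpa using
        (show HasDerivAt (fun w' => 2 / (1 + Real.exp w') ^ 2 + lam * w') _ w from this).deriv
    rw [hder, he]
    rw [div_add' _ _ _ (by positivity : ((1 + Real.exp w) ^ 3 : ℝ) ≠ 0),
      div_eq_zero_iff]
    constructor
    · rintro (h | h)
      · field_simp
        nlinarith [h]
      · exact absurd h (by positivity)
    · intro h
      left
      field_simp at h
      nlinarith [h]
end

section
/- Let σ(t) = 1/(1 + exp(−t)) and, for a budget η ∈ ℝ, define the restricted adversarial-training loss F_AT(w, b) = (1/2)[σ(b − w)² + (σ(w + b) − 1)²] + (1/2)[σ(b + (η − 1)w)² + (σ((1 − η)w + b) − 1)²]. Then for every w ∈ ℝ and every η ∈ ℝ, ∂F_AT/∂b(w, 0) = 0. In particular, the perfect decision boundary b = 0 is stationary in the bias direction for restricted adversarial training with any budget, so restricted adversarial training can reach the model with the best robustness (this is the stationarity part of Proposition 1). -/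
private lemma sig_neg (t : ℝ) :
    1 / (1 + Real.exp (-(-t))) = 1 - 1 / (1 + Real.exp (-t)) := by
  have h1 : (1 : ℝ) + Real.exp (-t) ≠ 0 := by positivity
  have h2 : (1 : ℝ) + Real.exp t ≠ 0 := by positivity
  rw [neg_neg]
  field_simp
  rw [add_sub_cancel_left, add_mul, one_mul, ← Real.exp_add, add_neg_cancel, Real.exp_zero]
  ring

private lemma sig_diff (t : ℝ) :
    DifferentiableAt ℝ (fun t : ℝ => 1 / (1 + Real.exp (-t))) t := by
  apply DifferentiableAt.div
  · exact differentiableAt_const 1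
  · exact (differentiableAt_const 1).add (by exact Real.differentiableAt_exp.comp t differentiable_neg.differentiableAt)
  · positivity

private lemma even_deriv_zero (f : ℝ → ℝ) (hf : DifferentiableAt ℝ f 0)
    (he : ∀ x, f (-x) = f x) : deriv f 0 = 0 := by
  have h1 : HasDerivAt f (deriv f 0) 0 := hf.hasDerivAt
  have h1' : HasDerivAt f (deriv f 0) (-(0:ℝ)) := by simpa using h1
  have h2 : HasDerivAt (fun x => f (-x)) (deriv f 0 * (-1)) 0 := by
    simpa [Function.comp_def] using h1'.comp 0 (hasDerivAt_neg (0:ℝ))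
  have h3 : HasDerivAt f (deriv f 0 * (-1)) 0 := by
    simpa only [he] using h2
  have := h1.unique h3
  linarith

/-- For the restricted adversarial-training loss with any budget `η`, the perfect
decision boundary `b = 0` is stationary in the bias direction (the stationarity part
of Proposition 1). -/
theorem stmt_12 :
    let σ : ℝ → ℝ := fun t => 1 / (1 + Real.exp (-t))
    ∀ η : ℝ,
      let Fat : ℝ → ℝ → ℝ := fun w b =>
        (1 / 2) * (σ (b - w) ^ 2 + (σ (w + b) - 1) ^ 2) +
        (1 / 2) * (σ (b + (η - 1) * w) ^ 2 + (σ ((1 - η) * w + b) - 1) ^ 2)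
      ∀ w : ℝ, deriv (fun b => Fat w b) 0 = 0 := by
  intro σ η Fat w
  have hσneg : ∀ t : ℝ, σ (-t) = 1 - σ t := fun t => sig_neg t
  apply even_deriv_zero
  · -- differentiability
    have hd : ∀ c : ℝ, DifferentiableAt ℝ (fun b : ℝ => σ (b + c)) 0 := by
      intro c
      have := (sig_diff (0 + c)).comp 0 (differentiableAt_id.add_const c); exact this
    have h1 : DifferentiableAt ℝ (fun b : ℝ => σ (b - w)) 0 := by
      simpa [sub_eq_add_neg] using hd (-w)
    have h2 : DifferentiableAt ℝ (fun b : ℝ => σ (w + b)) 0 := by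
      simpa [add_comm] using hd w
    have h3 : DifferentiableAt ℝ (fun b : ℝ => σ (b + (η - 1) * w)) 0 := hd _
    have h4 : DifferentiableAt ℝ (fun b : ℝ => σ ((1 - η) * w + b)) 0 := by
      simpa [add_comm] using hd ((1 - η) * w)
    exact (((h1.pow 2).add ((h2.sub_const 1).pow 2)).const_mul _).add
      (((h3.pow 2).add ((h4.sub_const 1).pow 2)).const_mul _)
  · -- evenness
    intro b
    show Fat w (-b) = Fat w b
    have e1 : σ (-b - w) = 1 - σ (b + w) := by
      have := hσneg (b + w); rw [← this]; ring_nf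
    have e2 : σ (w + -b) = 1 - σ (b - w) := by
      have := hσneg (b - w); rw [← this]; ring_nf
    have e3 : σ (-b + (η - 1) * w) = 1 - σ (b + (1 - η) * w) := by
      have := hσneg (b + (1 - η) * w); rw [← this]; ring_nf
    have e4 : σ ((1 - η) * w + -b) = 1 - σ (b + (η - 1) * w) := by
      have := hσneg (b + (η - 1) * w); rw [← this]; ring_nf
    simp only [Fat, e1, e2, e3, e4]
    have : σ (w + b) = σ (b + w) := by rw [add_comm]
    rw [this]
    have : σ ((1 - η) * w + b) = σ (b + (1 - η) * w) := by rw [add_comm]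
    rw [this]
    ring
end

section
/- Let σ(t) = 1/(1 + exp(−t)) and F(w, b) = σ(b − w)² + (σ(w + b) − 1)². Then for every w ∈ ℝ, the second partial derivative of F in the bias direction at (w, 0) equals ∂²F/∂b²(w, 0) = 4 σ′(w)(1 − σ(w))(3σ(w) − 1), and this quantity is strictly positive for every w > −ln 2 (in particular for every w > 0). -/
open Real

private noncomputable def Sg (t : ℝ) : ℝ := 1 / (1 + Real.exp (-t))
private noncomputable def Dg (t : ℝ) : ℝ := Real.exp (-t) / (1 + Real.exp (-t)) ^ 2
private noncomputable def Dg2 (t : ℝ) : ℝ :=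
  Real.exp (-t) * (Real.exp (-t) - 1) / (1 + Real.exp (-t)) ^ 3

private lemma denom_pos (t : ℝ) : 0 < 1 + Real.exp (-t) := by positivity

private lemma denom_ne (t : ℝ) : 1 + Real.exp (-t) ≠ 0 := (denom_pos t).ne'

private lemma hasDerivAt_base (t : ℝ) :
    HasDerivAt (fun s : ℝ => 1 + Real.exp (-s)) (-Real.exp (-t)) t := by
  have h : HasDerivAt (fun s : ℝ => Real.exp (-s)) (Real.exp (-t) * (-1)) t :=
    (hasDerivAt_neg t).exp
  simpa [mul_comm] using h.const_add 1

private lemma hasDerivAt_Sg (t : ℝ) : HasDerivAt Sg (Dg t) t := by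
  have h := (hasDerivAt_base t).inv (denom_ne t)
  have : HasDerivAt (fun s : ℝ => (1 + Real.exp (-s))⁻¹)
      (Real.exp (-t) / (1 + Real.exp (-t)) ^ 2) t := by
    simpa [Pi.inv_def] using h
  unfold Sg
  simpa [one_div, Dg] using this

private lemma hasDerivAt_Dg (t : ℝ) : HasDerivAt Dg (Dg2 t) t := by
  have hnum : HasDerivAt (fun s : ℝ => Real.exp (-s)) (-Real.exp (-t)) t := by
    simpa [mul_comm] using (hasDerivAt_neg t).exp
  have hden : HasDerivAt (fun s : ℝ => (1 + Real.exp (-s)) ^ 2)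
      (2 * (1 + Real.exp (-t)) * (-Real.exp (-t))) t := by
    simpa [pow_one, mul_comm, mul_assoc, Pi.pow_def] using
      (hasDerivAt_base t).pow 2
  have h := hnum.div hden (by positivity)
  have : HasDerivAt Dg
      ((-Real.exp (-t) * (1 + Real.exp (-t)) ^ 2 -
        Real.exp (-t) * (2 * (1 + Real.exp (-t)) * (-Real.exp (-t)))) /
        ((1 + Real.exp (-t)) ^ 2) ^ 2) t := by
    unfold Dg; simpa [Pi.div_def] using h
  convert this using 1
  have h0 := denom_ne t
  unfold Dg2
  field_simp
  ring

/-- For the normal-training loss `F(w, b) = σ(b − w)² + (σ(w + b) − 1)²`, the second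
partial derivative in the bias direction at `(w, 0)` equals
`4σ′(w)(1 − σ(w))(3σ(w) − 1)`, which is strictly positive for every `w > −ln 2`. -/
theorem stmt_14 :
    let σ : ℝ → ℝ := fun t => 1 / (1 + Real.exp (-t))
    let F : ℝ → ℝ → ℝ := fun w b => σ (b - w) ^ 2 + (σ (w + b) - 1) ^ 2
    ∀ w : ℝ,
      deriv (fun b => deriv (fun b' => F w b') b) 0
        = 4 * deriv σ w * (1 - σ w) * (3 * σ w - 1) ∧
      (-Real.log 2 < w → 0 < 4 * deriv σ w * (1 - σ w) * (3 * σ w - 1)) := by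
  intro σ F w
  have hσS : σ = Sg := rfl
  have hderivσ : deriv σ w = Dg w := (hasDerivAt_Sg w).deriv
  -- inner derivative
  have hinner : ∀ b : ℝ, deriv (fun b' => F w b') b
      = 2 * Sg (b - w) * Dg (b - w) + 2 * (Sg (w + b) - 1) * Dg (w + b) := by
    intro b
    have h1 : HasDerivAt (fun b' : ℝ => Sg (b' - w)) (Dg (b - w)) b := by
      have := (hasDerivAt_Sg (b - w)).comp b ((hasDerivAt_id b).sub_const w)
      simpa [Function.comp_def] using this
    have h2 : HasDerivAt (fun b' : ℝ => Sg (w + b')) (Dg (w + b)) b := by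
      have := (hasDerivAt_Sg (w + b)).comp b ((hasDerivAt_id b).const_add w)
      simpa [Function.comp_def] using this
    have hF : HasDerivAt (fun b' => F w b')
        (2 * Sg (b - w) * Dg (b - w) + 2 * (Sg (w + b) - 1) * Dg (w + b)) b := by
      have hA : HasDerivAt (fun b' : ℝ => Sg (b' - w) ^ 2)
          (2 * Sg (b - w) * Dg (b - w)) b := by
        simpa [mul_comm, mul_assoc, Pi.pow_def] using h1.pow 2
      have hB : HasDerivAt (fun b' : ℝ => (Sg (w + b') - 1) ^ 2)
          (2 * (Sg (w + b) - 1) * Dg (w + b)) b := by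
        simpa [mul_comm, mul_assoc, Pi.pow_def] using (h2.sub_const 1).pow 2
      simpa [F, hσS, Pi.add_def] using hA.add hB
    exact hF.deriv
  have houter : deriv (fun b => deriv (fun b' => F w b') b) 0
      = 2 * (Dg (-w) * Dg (-w) + Sg (-w) * Dg2 (-w))
        + 2 * (Dg w * Dg w + (Sg w - 1) * Dg2 w) := by
    have heq : (fun b => deriv (fun b' => F w b') b)
        = fun b => 2 * Sg (b - w) * Dg (b - w) + 2 * (Sg (w + b) - 1) * Dg (w + b) := by
      funext b; exact hinner b
    rw [heq]
    have hS1 : HasDerivAt (fun b : ℝ => Sg (b - w)) (Dg (-w)) 0 := by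
      have := (hasDerivAt_Sg (0 - w)).comp 0 ((hasDerivAt_id 0).sub_const w)
      simpa [Function.comp_def] using this
    have hD1 : HasDerivAt (fun b : ℝ => Dg (b - w)) (Dg2 (-w)) 0 := by
      have := (hasDerivAt_Dg (0 - w)).comp 0 ((hasDerivAt_id 0).sub_const w)
      simpa [Function.comp_def] using this
    have hS2 : HasDerivAt (fun b : ℝ => Sg (w + b)) (Dg w) 0 := by
      have := (hasDerivAt_Sg (w + 0)).comp 0 ((hasDerivAt_id 0).const_add w)
      simpa [Function.comp_def] using this
    have hD2 : HasDerivAt (fun b : ℝ => Dg (w + b)) (Dg2 w) 0 := by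
      have := (hasDerivAt_Dg (w + 0)).comp 0 ((hasDerivAt_id 0).const_add w)
      simpa [Function.comp_def] using this
    have hT1 := (hS1.const_mul 2).mul hD1
    have hT2 := ((hS2.sub_const 1).const_mul 2).mul hD2
    exact ((hT1.add hT2).deriv).trans (by ring)
  constructor
  · rw [houter, hderivσ, hσS]
    unfold Sg Dg Dg2
    have hu : Real.exp w = (Real.exp (-w))⁻¹ := by
      rw [← Real.exp_neg, neg_neg]
    simp only [neg_neg, hu]
    have h1 : Real.exp (-w) ≠ 0 := (Real.exp_pos _).ne'
    have h2 : 1 + Real.exp (-w) ≠ 0 := denom_ne w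
    have h3 : 1 + (Real.exp (-w))⁻¹ ≠ 0 := by positivity
    field_simp
    ring
  · intro hw
    rw [hderivσ, hσS]
    have hu : Real.exp (-w) < 2 := by
      have : -w < Real.log 2 := by linarith
      calc Real.exp (-w) < Real.exp (Real.log 2) := Real.exp_lt_exp.mpr this
        _ = 2 := Real.exp_log (by norm_num)
    have hp := denom_pos w
    have hDg : 0 < Dg w := by unfold Dg; positivity
    have h1 : 0 < 1 - Sg w := by
      unfold Sg
      rw [sub_pos, div_lt_one hp]
      linarith [Real.exp_pos (-w)]
    have h2 : 0 < 3 * Sg w - 1 := by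
      unfold Sg
      rw [sub_pos, mul_one_div, lt_div_iff₀ hp]
      linarith
    positivity
end

section
/- Let σ(t) = 1/(1 + exp(−t)), let F(w, b) = σ(b − w)² + (σ(w + b) − 1)² be the normal-training loss, and for η₁, η₂ ∈ ℝ define the unrestricted adversarial-training loss G(w, b) = (1/2)[σ(b − w)² + (σ(w + b) − 1)²] + (1/2)[σ((η₁ − 1)w + b)² + (σ((1 − η₂)w + b) − 1)²]. Suppose η₁ + η₂ = 2 and (η₁ − 1)w + b = 0, i.e. both adversarial examples lie exactly on the current decision boundary of the model (w, b). Then ∇G(w, b) = (1/2) ∇F(w, b): the adversarial terms contribute exactly zero to both partial derivatives ∂G/∂w and ∂G/∂b at (w, b), so the gradient of the unrestricted adversarial-training loss is exactly half the gradient of the normal-training loss. This is the key computation behind Proposition 2: adversarial examples placed on the decision boundary exert no force on the model. -/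
open Real

noncomputable def sg : ℝ → ℝ := fun t => 1 / (1 + Real.exp (-t))
noncomputable def sg' : ℝ → ℝ := fun t => Real.exp (-t) / (1 + Real.exp (-t)) ^ 2

lemma hasDerivAt_sg (t : ℝ) : HasDerivAt sg (sg' t) t := by
  have hpos : (0:ℝ) < 1 + Real.exp (-t) := by positivity
  have h1 : HasDerivAt (fun t : ℝ => 1 + Real.exp (-t)) (-Real.exp (-t)) t := by
    simpa using ((Real.hasDerivAt_exp (-t)).comp t (hasDerivAt_neg t)).const_add 1
  have h2 := h1.inv (ne_of_gt hpos)
  have he : (fun y : ℝ => (1 + Real.exp (-y))⁻¹) = sg := by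
    funext y; simp [sg, one_div]
  rw [← he]
  simpa [sg', neg_div, Pi.inv_def] using h2

lemma hasDerivAt_sg_lin (a c x : ℝ) :
    HasDerivAt (fun x : ℝ => sg (a * x + c)) (sg' (a * x + c) * a) x := by
  have hl : HasDerivAt (fun x : ℝ => a * x + c) a x := by
    simpa using ((hasDerivAt_id x).const_mul a).add_const c
  have := (hasDerivAt_sg (a * x + c)).comp x hl
  exact this

/-- Key computation behind Proposition 2: if the adversarial examples lie exactly on
the current decision boundary (`η₁ + η₂ = 2` and `(η₁ − 1)w + b = 0`), then the
gradient of the unrestricted adversarial-training loss `G` at `(w, b)` is exactly half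
the gradient of the normal-training loss `F`. -/
theorem stmt_16 (η₁ η₂ w b : ℝ) (hsum : η₁ + η₂ = 2)
    (hbd : (η₁ - 1) * w + b = 0) :
    let σ : ℝ → ℝ := fun t => 1 / (1 + Real.exp (-t))
    let F : ℝ → ℝ → ℝ := fun w' b' => σ (b' - w') ^ 2 + (σ (w' + b') - 1) ^ 2
    let G : ℝ → ℝ → ℝ := fun w' b' =>
      (1 / 2) * (σ (b' - w') ^ 2 + (σ (w' + b') - 1) ^ 2) +
      (1 / 2) * (σ ((η₁ - 1) * w' + b') ^ 2 + (σ ((1 - η₂) * w' + b') - 1) ^ 2)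
    deriv (fun w' => G w' b) w = (1 / 2) * deriv (fun w' => F w' b) w ∧
    deriv (fun b' => G w b') b = (1 / 2) * deriv (fun b' => F w b') b := by
  intro σ F G
  have hσ : σ = sg := rfl
  have h12 : 1 - η₂ = η₁ - 1 := by linarith
  have hbd2 : (1 - η₂) * w + b = 0 := by rw [h12]; exact hbd
  -- pieces in w'
  have t1w : HasDerivAt (fun w' => σ (b - w') ^ 2)
      (2 * sg (b - w) ^ 1 * (sg' (b - w) * (-1))) w := by
    have : HasDerivAt (fun w' : ℝ => sg ((-1) * w' + b)) (sg' ((-1) * w + b) * (-1)) w :=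
      hasDerivAt_sg_lin (-1) b w
    have h := this.pow 2
    simp only [neg_one_mul, neg_add_eq_sub] at h
    simpa [hσ, Pi.pow_def] using h
  have t2w : HasDerivAt (fun w' => (σ (w' + b) - 1) ^ 2)
      (2 * (sg (w + b) - 1) ^ 1 * (sg' (w + b) * 1)) w := by
    have : HasDerivAt (fun w' : ℝ => sg (1 * w' + b)) (sg' (1 * w + b) * 1) w :=
      hasDerivAt_sg_lin 1 b w
    have h := (this.sub_const 1).pow 2
    simp only [one_mul] at h
    simpa [hσ, Pi.pow_def] using h
  have t3w : HasDerivAt (fun w' => σ ((η₁ - 1) * w' + b) ^ 2)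
      (2 * sg ((η₁ - 1) * w + b) ^ 1 * (sg' ((η₁ - 1) * w + b) * (η₁ - 1))) w := by
    have h := (hasDerivAt_sg_lin (η₁ - 1) b w).pow 2
    simpa [hσ, Pi.pow_def] using h
  have t4w : HasDerivAt (fun w' => (σ ((1 - η₂) * w' + b) - 1) ^ 2)
      (2 * (sg ((1 - η₂) * w + b) - 1) ^ 1 * (sg' ((1 - η₂) * w + b) * (1 - η₂))) w := by
    have h := ((hasDerivAt_sg_lin (1 - η₂) b w).sub_const 1).pow 2
    simpa [hσ, Pi.pow_def] using h
  have hFw : HasDerivAt (fun w' => F w' b)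
      (2 * sg (b - w) ^ 1 * (sg' (b - w) * (-1)) + 2 * (sg (w + b) - 1) ^ 1 * (sg' (w + b) * 1)) w :=
    t1w.add t2w
  have hGw : HasDerivAt (fun w' => G w' b)
      ((1/2) * (2 * sg (b - w) ^ 1 * (sg' (b - w) * (-1)) + 2 * (sg (w + b) - 1) ^ 1 * (sg' (w + b) * 1))
       + (1/2) * (2 * sg ((η₁ - 1) * w + b) ^ 1 * (sg' ((η₁ - 1) * w + b) * (η₁ - 1))
       + 2 * (sg ((1 - η₂) * w + b) - 1) ^ 1 * (sg' ((1 - η₂) * w + b) * (1 - η₂)))) w :=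
    ((t1w.add t2w).const_mul (1/2)).add ((t3w.add t4w).const_mul (1/2))
  -- pieces in b'
  have t1b : HasDerivAt (fun b' => σ (b' - w) ^ 2)
      (2 * sg (b - w) ^ 1 * (sg' (b - w) * 1)) b := by
    have : HasDerivAt (fun b' : ℝ => sg (1 * b' + -w)) (sg' (1 * b + -w) * 1) b :=
      hasDerivAt_sg_lin 1 (-w) b
    have h := this.pow 2
    simp only [one_mul, add_neg_eq_iff_eq_add, ← sub_eq_add_neg] at h
    simpa [hσ, Pi.pow_def] using h
  have t2b : HasDerivAt (fun b' => (σ (w + b') - 1) ^ 2)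
      (2 * (sg (w + b) - 1) ^ 1 * (sg' (w + b) * 1)) b := by
    have : HasDerivAt (fun b' : ℝ => sg (1 * b' + w)) (sg' (1 * b + w) * 1) b :=
      hasDerivAt_sg_lin 1 w b
    have h := (this.sub_const 1).pow 2
    simp only [one_mul, add_comm] at h
    simpa [hσ, add_comm, Pi.pow_def] using h
  have t3b : HasDerivAt (fun b' => σ ((η₁ - 1) * w + b') ^ 2)
      (2 * sg ((η₁ - 1) * w + b) ^ 1 * (sg' ((η₁ - 1) * w + b) * 1)) b := by
    have : HasDerivAt (fun b' : ℝ => sg (1 * b' + (η₁ - 1) * w)) (sg' (1 * b + (η₁ - 1) * w) * 1) b :=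
      hasDerivAt_sg_lin 1 ((η₁ - 1) * w) b
    have h := this.pow 2
    simp only [one_mul, add_comm] at h
    simpa [hσ, add_comm, Pi.pow_def] using h
  have t4b : HasDerivAt (fun b' => (σ ((1 - η₂) * w + b') - 1) ^ 2)
      (2 * (sg ((1 - η₂) * w + b) - 1) ^ 1 * (sg' ((1 - η₂) * w + b) * 1)) b := by
    have : HasDerivAt (fun b' : ℝ => sg (1 * b' + (1 - η₂) * w)) (sg' (1 * b + (1 - η₂) * w) * 1) b :=
      hasDerivAt_sg_lin 1 ((1 - η₂) * w) b
    have h := (this.sub_const 1).pow 2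
    simp only [one_mul, add_comm] at h
    simpa [hσ, add_comm, Pi.pow_def] using h
  have hFb : HasDerivAt (fun b' => F w b')
      (2 * sg (b - w) ^ 1 * (sg' (b - w) * 1) + 2 * (sg (w + b) - 1) ^ 1 * (sg' (w + b) * 1)) b :=
    t1b.add t2b
  have hGb : HasDerivAt (fun b' => G w b')
      ((1/2) * (2 * sg (b - w) ^ 1 * (sg' (b - w) * 1) + 2 * (sg (w + b) - 1) ^ 1 * (sg' (w + b) * 1))
       + (1/2) * (2 * sg ((η₁ - 1) * w + b) ^ 1 * (sg' ((η₁ - 1) * w + b) * 1)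
       + 2 * (sg ((1 - η₂) * w + b) - 1) ^ 1 * (sg' ((1 - η₂) * w + b) * 1))) b :=
    ((t1b.add t2b).const_mul (1/2)).add ((t3b.add t4b).const_mul (1/2))
  have hsg0 : sg 0 = 1/2 := by norm_num [sg]
  constructor
  · rw [hGw.deriv, hFw.deriv, hbd, hbd2, hsg0]
    linear_combination (sg' 0 / 2) * hsum
  · rw [hGb.deriv, hFb.deriv, hbd, hbd2, hsg0]
    ring
end
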